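/- arXiv:2310.15069 — 3 statements merged into one kernel-verified Lean document; each statement's English description precedes it below -/
import Mathlib

section
/- Let S and D be symmetric positive definite p×p real matrices and let e_j be the j-th standard basis vector. Then for a real scalar δ, both D - δ e_j e_j^T and S + δ e_j e_j^T are positive semidefinite if and only if -1/(e_j^T S^{-1} e_j) ≤ δ ≤ 1/(e_j^T D^{-1} e_j). -/
open Matrix

lemma vmv_mulVec (p : ℕ) (u v x : Fin p → ℝ) : vecMulVec u v *ᵥ x = (v ⬝ᵥ x) • u := by
  ext i
  simp [vecMulVec_apply, mulVec, dotProduct, Finset.sum_mul, Finset.mul_sum]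
  apply Finset.sum_congr rfl
  intro k _; ring

lemma quad_expand (p : ℕ) (A : Matrix (Fin p) (Fin p) ℝ) (u x : Fin p → ℝ) (c : ℝ) :
    x ⬝ᵥ ((A + c • vecMulVec u u) *ᵥ x) = x ⬝ᵥ (A *ᵥ x) + c * (u ⬝ᵥ x)^2 := by
  rw [add_mulVec, dotProduct_add, smul_mulVec, dotProduct_smul, vmv_mulVec,
    dotProduct_smul]
  rw [dotProduct_comm x u]
  simp only [smul_eq_mul]; ring

lemma key (p : ℕ) (A : Matrix (Fin p) (Fin p) ℝ) (hA : A.PosDef) (u : Fin p → ℝ)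
    (hu : u ≠ 0) (c : ℝ) :
    (A + c • vecMulVec u u).PosSemidef ↔ 0 ≤ 1 + c * (u ⬝ᵥ A⁻¹ *ᵥ u) := by
  have hq : 0 < u ⬝ᵥ A⁻¹ *ᵥ u := by simpa using hA.inv.dotProduct_mulVec_pos hu
  set q := u ⬝ᵥ A⁻¹ *ᵥ u with hqdef
  have hdet : IsUnit A.det := isUnit_iff_ne_zero.mpr hA.det_pos.ne'
  have hAinv : A * A⁻¹ = 1 := mul_nonsing_inv _ hdet
  have hAu : A *ᵥ (A⁻¹ *ᵥ u) = u := by rw [mulVec_mulVec, hAinv, one_mulVec]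
  have hAT : Aᵀ = A := by
    have := hA.1; simpa [Matrix.IsHermitian, conjTranspose_eq_transpose_of_trivial] using this
  constructor
  · intro h
    have h2 := h.dotProduct_mulVec_nonneg (A⁻¹ *ᵥ u)
    rw [star_trivial, quad_expand, hAu, dotProduct_comm] at h2
    nlinarith [h2, hq]
  · intro h
    have hH : (A + c • vecMulVec u u).IsHermitian := by
      have h1 : (vecMulVec u u).IsHermitian := by
        unfold Matrix.IsHermitian
        ext i k
        simp [conjTranspose_apply, vecMulVec_apply, mul_comm]
      have h2 : (c • vecMulVec u u).IsHermitian := by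
        unfold Matrix.IsHermitian
        ext i k
        simp only [conjTranspose_apply, Matrix.smul_apply, vecMulVec_apply, star_trivial, smul_eq_mul]
        ring
      exact hA.1.add h2
    refine PosSemidef.of_dotProduct_mulVec_nonneg hH fun x => ?_
    rw [star_trivial, quad_expand]
    set s := x ⬝ᵥ A *ᵥ x with hs'
    set t := u ⬝ᵥ x with ht'
    have hs : 0 ≤ s := by simpa using hA.posSemidef.dotProduct_mulVec_nonneg x
    have key2 : ∀ r : ℝ, 0 ≤ q * (r * r) + (2 * t) * r + s := by
      intro r
      have h0 := hA.posSemidef.dotProduct_mulVec_nonneg (x + r • (A⁻¹ *ᵥ u))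
      rw [star_trivial] at h0
      have hyAx : (A⁻¹ *ᵥ u) ⬝ᵥ (A *ᵥ x) = t := by
        rw [dotProduct_mulVec, ← mulVec_transpose, hAT, hAu]
      have hxAy : x ⬝ᵥ (A *ᵥ (A⁻¹ *ᵥ u)) = t := by
        rw [hAu, dotProduct_comm]
      have hyAy : (A⁻¹ *ᵥ u) ⬝ᵥ (A *ᵥ (A⁻¹ *ᵥ u)) = q := by
        rw [hAu, dotProduct_comm]
      rw [mulVec_add, mulVec_smul, dotProduct_add, add_dotProduct, add_dotProduct,
        dotProduct_smul, smul_dotProduct, smul_dotProduct, dotProduct_smul,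
        hyAx, hxAy, hyAy] at h0
      simp only [smul_eq_mul] at h0
      nlinarith [h0]
    have hdisc := discrim_le_zero key2
    rw [discrim] at hdisc
    have hcs : t ^ 2 ≤ q * s := by nlinarith [hdisc]
    rcases le_or_gt 0 c with hc | hc
    · nlinarith [sq_nonneg t]
    · nlinarith [mul_nonneg hq.le hs, hcs, h]

theorem stmt_0 (p : ℕ) (S D : Matrix (Fin p) (Fin p) ℝ)
    (hS : S.PosDef) (hD : D.PosDef) (j : Fin p) (δ : ℝ) :
    ((D - δ • vecMulVec (Pi.single j 1) (Pi.single j 1)).PosSemidef ∧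
      (S + δ • vecMulVec (Pi.single j 1) (Pi.single j 1)).PosSemidef) ↔
    (-1 / ((Pi.single j 1 : Fin p → ℝ) ⬝ᵥ (S⁻¹ *ᵥ Pi.single j 1)) ≤ δ ∧
      δ ≤ 1 / ((Pi.single j 1 : Fin p → ℝ) ⬝ᵥ (D⁻¹ *ᵥ Pi.single j 1))) := by
  set u : Fin p → ℝ := Pi.single j 1 with hu'
  have hu : u ≠ 0 := by
    intro h
    have : u j = 0 := by rw [h]; rfl
    rw [hu', Pi.single_eq_same] at this
    exact one_ne_zero this
  have hqS : 0 < u ⬝ᵥ S⁻¹ *ᵥ u := by simpa using hS.inv.dotProduct_mulVec_pos hu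
  have hqD : 0 < u ⬝ᵥ D⁻¹ *ᵥ u := by simpa using hD.inv.dotProduct_mulVec_pos hu
  have hDsub : D - δ • vecMulVec u u = D + (-δ) • vecMulVec u u := by
    rw [sub_eq_add_neg, neg_smul]
  rw [hDsub, key p D hD u hu (-δ), key p S hS u hu δ, div_le_iff₀ hqS, le_div_iff₀ hqD]
  constructor
  · rintro ⟨h1, h2⟩
    constructor <;> nlinarith
  · rintro ⟨h1, h2⟩
    constructor <;> nlinarith
end

section
/- Let Σ be symmetric positive definite, m ≥ 1, and S symmetric. The block matrix G_S (diagonal blocks Σ, off-diagonal blocks Σ - S, (m+1)×(m+1) blocks) is positive semidefinite if and only if S ⪰ 0 and ((m+1)/m)Σ - S ⪰ 0. -/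
open Matrix

section auxStmt11
variable {p : ℕ} {ι : Type*} [Fintype ι]

private lemma dp_sum_left11 (f : ι → (Fin p → ℝ)) (w : Fin p → ℝ) :
    (∑ k, f k) ⬝ᵥ w = ∑ k, f k ⬝ᵥ w := by
  simp only [dotProduct, Finset.sum_apply, Finset.sum_mul]
  rw [Finset.sum_comm]

private lemma mv_sum11 (A : Matrix (Fin p) (Fin p) ℝ) (f : ι → (Fin p → ℝ)) :
    A *ᵥ (∑ k, f k) = ∑ k, A *ᵥ f k := by
  rw [← mulVecLin_apply, map_sum]
  simp [mulVecLin_apply]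

private lemma dp_sum_right11 (w : Fin p → ℝ) (f : ι → (Fin p → ℝ)) :
    w ⬝ᵥ (∑ k, f k) = ∑ k, w ⬝ᵥ f k := by
  simp only [dotProduct, Finset.sum_apply, Finset.mul_sum]
  rw [Finset.sum_comm]

private lemma bilin_sum_sum11 (A : Matrix (Fin p) (Fin p) ℝ) (f : ι → (Fin p → ℝ)) :
    (∑ k, f k) ⬝ᵥ A *ᵥ (∑ k, f k) = ∑ k, ∑ l, f k ⬝ᵥ A *ᵥ f l := by
  rw [dp_sum_left11]
  exact Finset.sum_congr rfl fun k _ => by rw [mv_sum11, dp_sum_right11]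

private lemma isHermitian_of_isSymm11 (A : Matrix (Fin p) (Fin p) ℝ) (h : A.IsSymm) :
    A.IsHermitian := by
  ext i j
  rw [conjTranspose_apply, star_trivial]
  conv_rhs => rw [← h]
  rfl

private lemma bilin_comm11 (S : Matrix (Fin p) (Fin p) ℝ) (h : S.IsSymm)
    (u w : Fin p → ℝ) : u ⬝ᵥ S *ᵥ w = w ⬝ᵥ S *ᵥ u := by
  rw [dotProduct_mulVec, dotProduct_comm, ← mulVec_transpose, h]

/-- Cauchy–Schwarz-type convexity: `(∑ f)ᵀ S (∑ f) ≤ card • ∑ fᵀ S f` for `S ⪰ 0`. -/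
private lemma key_ineq11 (S : Matrix (Fin p) (Fin p) ℝ) (hS : S.IsSymm)
    (hpsd : S.PosSemidef) (f : ι → (Fin p → ℝ)) :
    ∑ k, ∑ l, f k ⬝ᵥ S *ᵥ f l ≤ (Fintype.card ι : ℝ) * ∑ k, f k ⬝ᵥ S *ᵥ f k := by
  have hsub : ∀ u w : Fin p → ℝ,
      0 ≤ u ⬝ᵥ S *ᵥ u + w ⬝ᵥ S *ᵥ w - 2 * (u ⬝ᵥ S *ᵥ w) := by
    intro u w
    have h0 := hpsd.dotProduct_mulVec_nonneg (u - w)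
    simp only [star_trivial] at h0
    rw [mulVec_sub, dotProduct_sub, sub_dotProduct, sub_dotProduct] at h0
    have hc := bilin_comm11 S hS u w
    linarith
  have h0 : 0 ≤ ∑ k : ι, ∑ l : ι,
      (f k ⬝ᵥ S *ᵥ f k + f l ⬝ᵥ S *ᵥ f l - 2 * (f k ⬝ᵥ S *ᵥ f l)) :=
    Finset.sum_nonneg fun k _ => Finset.sum_nonneg fun l _ => hsub _ _
  have hexp : ∑ k : ι, ∑ l : ι,
      (f k ⬝ᵥ S *ᵥ f k + f l ⬝ᵥ S *ᵥ f l - 2 * (f k ⬝ᵥ S *ᵥ f l))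
      = (Fintype.card ι : ℝ) * (∑ k, f k ⬝ᵥ S *ᵥ f k)
        + (Fintype.card ι : ℝ) * (∑ k, f k ⬝ᵥ S *ᵥ f k)
        - 2 * ∑ k, ∑ l, f k ⬝ᵥ S *ᵥ f l := by
    simp only [Finset.sum_sub_distrib, Finset.sum_add_distrib, Finset.sum_const,
      Finset.card_univ, nsmul_eq_mul, Finset.mul_sum, ← Finset.sum_mul]
  rw [hexp] at h0
  linarith

private lemma quad_expand11 {N : ℕ} (A S : Matrix (Fin p) (Fin p) ℝ)
    (G : Matrix (Fin N × Fin p) (Fin N × Fin p) ℝ)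
    (hG : ∀ k l i j, G (k, i) (l, j) = A i j + if k = l then S i j else 0)
    (x : Fin N × Fin p → ℝ) :
    x ⬝ᵥ G *ᵥ x =
      (fun i => ∑ k, x (k, i)) ⬝ᵥ A *ᵥ (fun i => ∑ k, x (k, i)) +
      ∑ k, (fun i => x (k, i)) ⬝ᵥ S *ᵥ (fun i => x (k, i)) := by
  simp only [dotProduct, mulVec, Fintype.sum_prod_type]
  simp only [hG, add_mul, ite_mul, zero_mul, Finset.sum_add_distrib, mul_add,
    Finset.sum_ite_eq, Finset.mem_univ, if_true]
  congr 1
  · rw [Finset.sum_comm]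
    refine Finset.sum_congr rfl fun i _ => ?_
    rw [Finset.sum_mul]
    refine Finset.sum_congr rfl fun k _ => ?_
    congr 1
    rw [Finset.sum_comm]
    refine Finset.sum_congr rfl fun j _ => ?_
    rw [Finset.mul_sum]
  · refine Finset.sum_congr rfl fun k _ => Finset.sum_congr rfl fun i _ => ?_
    congr 1
    rw [Finset.sum_congr rfl (fun l (_ : l ∈ Finset.univ) =>
      show (∑ j, if k = l then S i j * x (l, j) else 0)
         = if k = l then ∑ j, S i j * x (l, j) else 0 by split <;> simp)]
    simp [Finset.sum_ite_eq]

end auxStmt11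

theorem stmt_11 (p m : ℕ) (hm : 1 ≤ m)
    (Sig S : Matrix (Fin p) (Fin p) ℝ) (hSig : Sig.PosDef) (hS : S.IsSymm)
    (G : Matrix (Fin (m + 1) × Fin p) (Fin (m + 1) × Fin p) ℝ)
    (hG : ∀ k l i j, G (k, i) (l, j) = if k = l then Sig i j else (Sig - S) i j) :
    G.PosSemidef ↔ S.PosSemidef ∧ ((((m : ℝ) + 1) / (m : ℝ)) • Sig - S).PosSemidef := by
  have hm1 : (1 : ℝ) ≤ (m : ℝ) := by exact_mod_cast hm
  have hmpos : (0 : ℝ) < (m : ℝ) := by linarith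
  have hm0 : (m : ℝ) ≠ 0 := ne_of_gt hmpos
  have hSigsym : ∀ i j, Sig i j = Sig j i := fun i j => by
    have := hSig.1.apply j i
    simpa using this
  have hSsym : ∀ i j, S i j = S j i := fun i j => by
    have := congrFun (congrFun hS j) i
    simpa [transpose_apply] using this
  have hSigIsSymm : Sig.IsSymm := by
    ext i j; rw [transpose_apply]; exact hSigsym j i
  have hG' : ∀ k l i j, G (k, i) (l, j) = (Sig - S) i j + if k = l then S i j else 0 := by
    intro k l i j
    rw [hG]
    by_cases h : k = l <;> simp [h, Matrix.sub_apply]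
  have hGherm : G.IsHermitian := by
    apply Matrix.ext
    rintro ⟨k, i⟩ ⟨l, j⟩
    rw [conjTranspose_apply, star_trivial, hG, hG]
    by_cases h : k = l
    · rw [if_pos h.symm, if_pos h]
      exact hSigsym j i
    · rw [if_neg (Ne.symm h), if_neg h, Matrix.sub_apply, Matrix.sub_apply, hSigsym j i, hSsym j i]
  constructor
  · intro hpsd
    constructor
    · -- S is PSD
      refine Matrix.PosSemidef.of_dotProduct_mulVec_nonneg (isHermitian_of_isSymm11 S hS) fun x => ?_
      simp only [star_trivial]
      set k0 : Fin (m + 1) := ⟨0, by omega⟩ with hk0def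
      set k1 : Fin (m + 1) := ⟨1, by omega⟩ with hk1def
      have hk01 : k0 ≠ k1 := by simp [hk0def, hk1def, Fin.ext_iff]
      set y : Fin (m + 1) × Fin p → ℝ :=
        fun a => if a.1 = k0 then x a.2 else if a.1 = k1 then -(x a.2) else 0 with hy
      have h0 := hpsd.dotProduct_mulVec_nonneg y
      simp only [star_trivial] at h0
      rw [quad_expand11 (Sig - S) S G hG' y] at h0
      have hv : (fun i => ∑ k, y (k, i)) = (0 : Fin p → ℝ) := by
        funext i
        have hsplit : ∀ k : Fin (m + 1),
            y (k, i) = (if k = k0 then x i else 0) + (if k = k1 then -(x i) else 0) := by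
          intro k
          by_cases h1 : k = k0
          · subst h1; simp [hy, hk01]
          · by_cases h2 : k = k1
            · subst h2; simp [hy, h1, Ne.symm hk01]
            · simp [hy, h1, h2]
        rw [Finset.sum_congr rfl fun k _ => hsplit k, Finset.sum_add_distrib]
        simp [Finset.sum_ite_eq']
      rw [hv, zero_dotProduct] at h0
      have hQ : ∀ k : Fin (m + 1),
          ((fun i => y (k, i)) ⬝ᵥ S *ᵥ (fun i => y (k, i)))
            = (if k = k0 then x ⬝ᵥ S *ᵥ x else 0) + (if k = k1 then x ⬝ᵥ S *ᵥ x else 0) := by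
        intro k
        by_cases h1 : k = k0
        · subst h1
          have hfun : (fun i => y (k0, i)) = x := funext fun i => by simp [hy]
          rw [hfun]
          simp [hk01]
        · by_cases h2 : k = k1
          · subst h2
            have hfun : (fun i => y (k1, i)) = -x := funext fun i => by
              simp [hy, Ne.symm hk01]
            rw [hfun, mulVec_neg, dotProduct_neg, neg_dotProduct, neg_neg]
            simp [h1]
          · have hfun : (fun i => y (k, i)) = (0 : Fin p → ℝ) := funext fun i => by
              simp [hy, h1, h2]
            rw [hfun]
            simp [h1, h2]
      rw [Finset.sum_congr rfl fun k _ => hQ k, Finset.sum_add_distrib] at h0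
      simp only [Finset.sum_ite_eq', Finset.mem_univ, if_true] at h0
      linarith
    · -- (m+1)/m • Sig - S is PSD
      have hA2symm : ((((m : ℝ) + 1) / (m : ℝ)) • Sig - S).IsSymm := by
        unfold Matrix.IsSymm
        rw [transpose_sub, transpose_smul, hSigIsSymm, hS]
      refine Matrix.PosSemidef.of_dotProduct_mulVec_nonneg (isHermitian_of_isSymm11 _ hA2symm) fun x => ?_
      simp only [star_trivial]
      set y : Fin (m + 1) × Fin p → ℝ := fun a => x a.2 with hy
      have h0 := hpsd.dotProduct_mulVec_nonneg y
      simp only [star_trivial] at h0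
      rw [quad_expand11 (Sig - S) S G hG' y] at h0
      have hv : (fun i => ∑ _k : Fin (m + 1), y (_k, i)) = ((m : ℝ) + 1) • x := by
        funext i
        simp [hy, Finset.sum_const, Finset.card_univ, nsmul_eq_mul]
      rw [hv, smul_dotProduct, mulVec_smul, dotProduct_smul, smul_eq_mul, smul_eq_mul] at h0
      have hsum : ∑ _k : Fin (m + 1), ((fun i => y (_k, i)) ⬝ᵥ S *ᵥ (fun i => y (_k, i)))
          = ((m : ℝ) + 1) * (x ⬝ᵥ S *ᵥ x) := by
        have : ∀ k : Fin (m + 1), (fun i => y (k, i)) = x := fun k => funext fun i => rfl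
        simp only [this, Finset.sum_const, Finset.card_univ, Fintype.card_fin, nsmul_eq_mul]
        push_cast
        ring_nf
      rw [hsum] at h0
      rw [sub_mulVec, dotProduct_sub] at h0
      set a := x ⬝ᵥ Sig *ᵥ x with ha
      set b := x ⬝ᵥ S *ᵥ x with hb
      rw [sub_mulVec, dotProduct_sub, smul_mulVec, dotProduct_smul, smul_eq_mul, ← ha, ← hb]
      -- h0 : 0 ≤ (m+1)*((m+1)*(a - b)) + (m+1)*b
      have h1 : 0 ≤ ((m : ℝ) + 1) * (((m : ℝ) + 1) * a - (m : ℝ) * b) := by nlinarith [h0]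
      have h2 : 0 ≤ ((m : ℝ) + 1) * a - (m : ℝ) * b := by nlinarith [h1]
      have h3 : ((m : ℝ) + 1) / (m : ℝ) * a - b = (((m : ℝ) + 1) * a - (m : ℝ) * b) / (m : ℝ) := by
        field_simp
      rw [h3]
      exact div_nonneg h2 (le_of_lt hmpos)
  · rintro ⟨hSpsd, hA2psd⟩
    refine Matrix.PosSemidef.of_dotProduct_mulVec_nonneg hGherm fun x => ?_
    simp only [star_trivial]
    rw [quad_expand11 (Sig - S) S G hG' x]
    set f : Fin (m + 1) → Fin p → ℝ := fun k i => x (k, i) with hf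
    have hveq : (fun i => ∑ k, x (k, i)) = ∑ k, f k := by
      funext i; simp [hf, Finset.sum_apply]
    rw [hveq]
    set v := ∑ k, f k with hvdef
    have hkey : v ⬝ᵥ S *ᵥ v ≤ ((m : ℝ) + 1) * ∑ k, f k ⬝ᵥ S *ᵥ f k := by
      have h := key_ineq11 S hS hSpsd f
      rw [hvdef, bilin_sum_sum11]
      simpa [Fintype.card_fin] using h
    have h2 := hA2psd.dotProduct_mulVec_nonneg v
    simp only [star_trivial] at h2
    rw [sub_mulVec, dotProduct_sub, smul_mulVec, dotProduct_smul, smul_eq_mul] at h2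
    rw [sub_mulVec, dotProduct_sub]
    set a := v ⬝ᵥ Sig *ᵥ v with ha
    set b := v ⬝ᵥ S *ᵥ v with hb
    set t := ∑ k, f k ⬝ᵥ S *ᵥ f k with ht
    have h3 : 0 ≤ (m : ℝ) * (((m : ℝ) + 1) / (m : ℝ) * a - b) := mul_nonneg (le_of_lt hmpos) h2
    have h4 : (m : ℝ) * (((m : ℝ) + 1) / (m : ℝ) * a - b) = ((m : ℝ) + 1) * a - (m : ℝ) * b := by
      field_simp
    rw [h4] at h3
    have h6 : 0 ≤ ((m : ℝ) + 1) * t - b := by linarith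
    have h5 : ((m : ℝ) + 1) * ((a - b) + t) = (((m : ℝ) + 1) * a - (m : ℝ) * b)
        + (((m : ℝ) + 1) * t - b) := by ring
    have h7 : 0 ≤ ((m : ℝ) + 1) * ((a - b) + t) := by rw [h5]; linarith
    have h8 := div_nonneg h7 (by linarith : (0 : ℝ) ≤ (m : ℝ) + 1)
    rwa [mul_div_cancel_left₀ _ (by linarith : ((m : ℝ) + 1) ≠ 0)] at h8
end

section
/- Let D, S be symmetric positive definite with v^T D^{-1} v > 0 and v^T S^{-1} v > 0 for a nonzero vector v, and m ≥ 1. The value δ* = (m v^T S^{-1} v - v^T D^{-1} v)/((m+1)(v^T S^{-1} v)(v^T D^{-1} v)) satisfies -1/(v^T S^{-1} v) ≤ δ* ≤ 1/(v^T D^{-1} v). -/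
open Matrix

theorem stmt_16 (p : ℕ) (S D : Matrix (Fin p) (Fin p) ℝ)
    (hS : S.PosDef) (hD : D.PosDef) (v : Fin p → ℝ) (hv : v ≠ 0)
    (m : ℝ) (hm : 1 ≤ m) :
    -1 / (v ⬝ᵥ (S⁻¹ *ᵥ v)) ≤
        (m * (v ⬝ᵥ (S⁻¹ *ᵥ v)) - v ⬝ᵥ (D⁻¹ *ᵥ v)) /
          ((m + 1) * (v ⬝ᵥ (S⁻¹ *ᵥ v)) * (v ⬝ᵥ (D⁻¹ *ᵥ v))) ∧
      (m * (v ⬝ᵥ (S⁻¹ *ᵥ v)) - v ⬝ᵥ (D⁻¹ *ᵥ v)) /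
          ((m + 1) * (v ⬝ᵥ (S⁻¹ *ᵥ v)) * (v ⬝ᵥ (D⁻¹ *ᵥ v))) ≤
        1 / (v ⬝ᵥ (D⁻¹ *ᵥ v)) := by
  have ha : 0 < v ⬝ᵥ (S⁻¹ *ᵥ v) := by simpa using hS.inv.dotProduct_mulVec_pos hv
  have hb : 0 < v ⬝ᵥ (D⁻¹ *ᵥ v) := by simpa using hD.inv.dotProduct_mulVec_pos hv
  set a := v ⬝ᵥ (S⁻¹ *ᵥ v)
  set b := v ⬝ᵥ (D⁻¹ *ᵥ v)
  have hden : 0 < (m + 1) * a * b := by positivity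
  constructor
  · rw [div_le_div_iff₀ ha hden]
    nlinarith [mul_pos ha hb, mul_nonneg (mul_pos ha hb).le (by linarith : (0:ℝ) ≤ m)]
  · rw [div_le_div_iff₀ hden hb]
    nlinarith [mul_pos ha hb, sq_nonneg b]
end
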